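/- Let A be a type with decidable equality. If EMPCF(A, Bool, T') holds for every T' : Set (List (A × Bool)), then GDC(A, Bool, T) holds for every T : Set (List (A × Bool)). -/

import Mathlib

namespace Paper

universe u v

/-- `listSub u α` : every element of the list `u` belongs to `α` (written `u ⊂ α`). -/
def listSub {A : Type u} (u : List A) (α : Set A) : Prop := ∀ a ∈ u, a ∈ α

/-- `⟨T⟩` : the sets all of whose finite sublists are in `T`. -/
def eng {A : Type u} (T : Set (List A)) : Set (Set A) :=
  {α | ∀ l : List A, listSub l α → l ∈ T}

/-- `⟨T⟩∃` : the sets having some finite sublist in `T`. -/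
def engE {A : Type u} (T : Set (List A)) : Set (Set A) :=
  {α | ∃ l : List A, listSub l α ∧ l ∈ T}

/-- `û` : the set of elements of the list `u`. -/
def hat {A : Type u} (l : List A) : Set A := {a | a ∈ l}

/-- `⌊P⌋` : the lists whose set of elements is in `P`. -/
def res {A : Type u} (P : Set (Set A)) : Set (List A) := {l | hat l ∈ P}

/-- Domain of a decidable partial function. -/
def ddom {A : Type u} {B : Type v} (f : A → Option B) : Set A := {a | f a ≠ none}

/-- Graph of a decidable partial function. -/
def dgraph {A : Type u} {B : Type v} (f : A → Option B) : Set (A × B) :=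
  {p | f p.1 = some p.2}

/-- `g ≺ f` for decidable partial functions: `g` extends `f` by one new point. -/
def dext {A : Type u} {B : Type v} (g f : A → Option B) : Prop :=
  ∃ a, a ∉ ddom f ∧ ddom g = ddom f ∪ {a} ∧ ∀ x ∈ ddom f, f x = g x

/-- `f` is dpf-maximal in `P`. -/
def MaxDPF {A : Type u} {B : Type v} (P : Set (Set (A × B))) (f : A → Option B) : Prop :=
  dgraph f ∈ P ∧ ∀ g : A → Option B, dext g f → dgraph g ∉ P

/-- `EMPCF(A,B,T)` : existence of a maximal decidable partial choice function. -/
def EMPCF {A : Type u} {B : Type v} (T : Set (List (A × B))) : Prop :=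
  (∃ α : Set (A × B), α ∈ eng T) → ∃ f : A → Option B, MaxDPF (eng T) f

/-- The operator `φ` used to define `A`-`B`-approximability. -/
def phi {A : Type u} {B : Type v} (T X : Set (List (A × B))) : Set (List (A × B)) :=
  {l | l ∈ res (eng T) ∧ ∀ a : A, (¬ ∃ b, (a, b) ∈ l) → ∃ b, l ++ [(a, b)] ∈ X}

/-- `T` is `A`-`B`-approximable: `[]` is in the greatest fixed point of `φ`,
equivalently there is a `φ`-dense set containing `[]`. -/
def Approximable {A : Type u} {B : Type v} (T : Set (List (A × B))) : Prop :=
  ∃ X : Set (List (A × B)), X ⊆ phi T X ∧ [] ∈ X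

/-- `T` has an `A`-`B`-choice function. -/
def HasChoiceFun {A : Type u} {B : Type v} (T : Set (List (A × B))) : Prop :=
  ∃ f : A → B, ∀ l : List (A × B), listSub l {p : A × B | f p.1 = p.2} → l ∈ T

/-- Generalised dependent choice. -/
def GDC {A : Type u} {B : Type v} (T : Set (List (A × B))) : Prop :=
  Approximable T → HasChoiceFun T

/-- if `EMPCF(A, Bool, T')` holds for every `T'`, then
`GDC(A, Bool, T)` holds for every `T` (`A` with decidable equality). -/
theorem EMPCF_bool_implies_GDC_bool (A : Type u) [DecidableEq A]
    (h : ∀ T' : Set (List (A × Bool)), EMPCF T') :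
    ∀ T : Set (List (A × Bool)), GDC T := by
  intro T hap
  obtain ⟨X, hX, hnil⟩ := hap
  set T' : Set (List (A × Bool)) := {u | ∃ v ∈ X, listSub u (hat v)} with hT'
  have hne : ∃ α : Set (A × Bool), α ∈ eng T' := by
    refine ⟨∅, fun l hl => ?_⟩
    have hl0 : l = [] := by
      cases l with
      | nil => rfl
      | cons p t => exact absurd (hl p List.mem_cons_self) (fun h => h)
    subst hl0
    exact ⟨[], hnil, fun a ha => absurd ha List.not_mem_nil⟩
  obtain ⟨f, hfP, hfmax⟩ := h T' hne
  -- f is total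
  have htot : ∀ a, f a ≠ none := by
    intro a ha'
    by_cases hfa : f a = none
    case neg => exact hfa ha'
    -- for each b, the one-point extension is not in eng T'
    have hbad : ∀ b : Bool, ∃ u : List (A × Bool),
        listSub u (dgraph f ∪ {(a, b)}) ∧ u ∉ T' := by
      intro b
      have hdx : dext (Function.update f a (some b)) f := by
        refine ⟨a, by simp [ddom, hfa], ?_, ?_⟩
        · ext x
          by_cases hx : x = a <;> simp [ddom, Function.update, hx, hfa]
        · intro x hx
          have hxa : x ≠ a := by
            intro hxa; subst hxa; exact hx hfa
          simp [Function.update, hxa]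
      have hg := hfmax _ hdx
      have hgraph : dgraph (Function.update f a (some b)) = dgraph f ∪ {(a, b)} := by
        ext ⟨x, y⟩
        by_cases hx : x = a
        · subst hx
          simp [dgraph, Function.update, hfa, Set.mem_union, eq_comm]
        · simp [dgraph, Function.update, hx, Set.mem_union, Prod.ext_iff]
      rw [hgraph] at hg
      by_contra hcon
      push_neg at hcon
      exact hg (fun l hl => hcon l hl)
    obtain ⟨u₀, hu₀s, hu₀n⟩ := hbad false
    obtain ⟨u₁, hu₁s, hu₁n⟩ := hbad true
    set u : List (A × Bool) := (u₀ ++ u₁).filter (fun p => p.1 ≠ a) with hu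
    have husub : listSub u (dgraph f) := by
      intro p hp
      rw [hu, List.mem_filter] at hp
      obtain ⟨hpmem, hpa⟩ := hp
      have hpa' : p.1 ≠ a := by simpa using hpa
      rcases List.mem_append.mp hpmem with hm | hm
      · rcases hu₀s p hm with h1 | h1
        · exact h1
        · exact absurd (congrArg Prod.fst h1) hpa'
      · rcases hu₁s p hm with h1 | h1
        · exact h1
        · exact absurd (congrArg Prod.fst h1) hpa'
    have huT' : u ∈ T' := hfP u husub
    obtain ⟨v, hvX, hvs⟩ := huT'
    -- key: from v (or an extension) we get a witness for one of the b's
    have key : ∀ (b : Bool) (w : List (A × Bool)), w ∈ X →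
        (∀ p ∈ u, p ∈ w) → (a, b) ∈ w → False := by
      intro b w hwX hw hab
      have hub : (if b then u₁ else u₀) ∉ T' := by cases b <;> simpa
      apply hub
      refine ⟨w, hwX, fun p hp => ?_⟩
      have hpm : p ∈ u₀ ++ u₁ := by
        cases b
        · exact List.mem_append.mpr (Or.inl (by simpa using hp))
        · exact List.mem_append.mpr (Or.inr (by simpa using hp))
      have hps : p ∈ dgraph f ∪ {(a, b)} := by
        cases b
        · exact hu₀s p (by simpa using hp)
        · exact hu₁s p (by simpa using hp)
      rcases hps with h1 | h1
      · have hpa : p.1 ≠ a := by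
          intro he
          have : f a = some p.2 := by rw [← he]; exact h1
          rw [hfa] at this; cases this
        have hpu : p ∈ u := by
          rw [hu, List.mem_filter]
          exact ⟨hpm, by simpa using hpa⟩
        exact hw p hpu
      · have : p = (a, b) := h1
        rw [this]; exact hab
    by_cases hex : ∃ b, (a, b) ∈ v
    · obtain ⟨b, hb⟩ := hex
      exact key b v hvX (fun p hp => hvs p hp) hb
    · obtain ⟨b, hvb⟩ := (hX hvX).2 a hex
      exact key b (v ++ [(a, b)]) hvb
        (fun p hp => List.mem_append.mpr (Or.inl (hvs p hp)))
        (List.mem_append.mpr (Or.inr (by simp)))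
  -- define the total choice function
  let F : A → Bool := fun a => (f a).getD true
  have hFf : ∀ a, f a = some (F a) := by
    intro a
    cases hfa : f a with
    | none => exact absurd hfa (htot a)
    | some b => simp [F, hfa]
  refine ⟨F, fun l hl => ?_⟩
  have hlsub : listSub l (dgraph f) := by
    intro p hp
    have := hl p hp
    simp only [Set.mem_setOf_eq] at this
    show f p.1 = some p.2
    rw [hFf p.1, this]
  obtain ⟨v, hvX, hvs⟩ := hfP l hlsub
  exact (hX hvX).1 l hvs

end Paper
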